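/- Let (a_n) be a strictly increasing sequence of positive integers with a_{n+1}/a_n → 1, and let (d_m) be a sequence in ℝ/ℤ such that 0 is a non-isolated point of the closure of {d_m}. Then the set {a_n · d_m : n, m ∈ ℕ} is dense in ℝ/ℤ. -/

import Mathlib

open Filter Topology

private lemma sweep_lemma (a : ℕ → ℕ) (ha_mono : StrictMono a)
    (ε δ ξ : ℝ) (hε : 0 < ε) (hδ : 0 < δ) (hξ0 : 0 ≤ ξ) (hξ1 : ξ < 1)
    (N : ℕ) (hstep : ∀ n, N ≤ n → (a (n + 1) : ℝ) ≤ (1 + ε) * a n)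
    (hstart : (a N : ℝ) * δ < ε) :
    ∃ n, |(a n : ℝ) * δ - ξ| < ε := by
  have haN : ∀ n, 0 ≤ (a n : ℝ) := fun n => Nat.cast_nonneg _
  have hex : ∃ k, ξ ≤ (a (N + k) : ℝ) * δ := by
    obtain ⟨k, hk⟩ := exists_nat_ge (ξ / δ)
    refine ⟨k, ?_⟩
    have h1 : (k : ℝ) ≤ (a (N + k) : ℝ) := by
      exact_mod_cast le_trans (Nat.le_add_left k N) ha_mono.le_apply
    have h2 := (div_le_iff₀ hδ).mp hk
    nlinarith
  classical
  have hkP : ξ ≤ (a (N + Nat.find hex) : ℝ) * δ := Nat.find_spec hex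
  rcases Nat.eq_zero_or_pos (Nat.find hex) with h0 | hpos
  · refine ⟨N, ?_⟩
    rw [h0, Nat.add_zero] at hkP
    rw [abs_lt]
    constructor <;> nlinarith
  · obtain ⟨k', hk'⟩ := Nat.exists_eq_succ_of_ne_zero hpos.ne'
    have hlt : ¬ ξ ≤ (a (N + k') : ℝ) * δ := by
      have := Nat.find_min hex (m := k') (by omega)
      simpa using this
    push_neg at hlt
    rw [hk'] at hkP
    refine ⟨N + (k' + 1), ?_⟩
    have hstep' : (a (N + k' + 1) : ℝ) ≤ (1 + ε) * a (N + k') :=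
      hstep _ (Nat.le_add_right N k')
    have hkey : (a (N + (k' + 1)) : ℝ) * δ ≤ (1 + ε) * ((a (N + k') : ℝ) * δ) := by
      have : N + (k' + 1) = N + k' + 1 := rfl
      rw [this]
      nlinarith [haN (N + k' + 1)]
    rw [abs_lt]
    constructor <;> nlinarith

private lemma dist_coe_le (u v : ℝ) :
    dist (u : UnitAddCircle) (v : UnitAddCircle) ≤ |u - v| := by
  rw [dist_eq_norm, ← AddCircle.coe_sub]
  simpa using QuotientAddGroup.norm_mk_le_norm (S := AddSubgroup.zmultiples (1 : ℝ)) (m := u - v)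

theorem furstenberg_lemma_density_of_non_lacunary
    (a : ℕ → ℕ) (d : ℕ → UnitAddCircle)
    (ha_pos : ∀ n, 0 < a n) (ha_mono : StrictMono a)
    (ha_ratio : Tendsto (fun n => (a (n + 1) : ℝ) / (a n : ℝ)) atTop (𝓝 1))
    (hd : AccPt (0 : UnitAddCircle) (𝓟 (Set.range d))) :
    Dense {y : UnitAddCircle | ∃ n m : ℕ, y = a n • d m} := by
  rw [Metric.dense_iff]
  intro x ε hε
  set ε' : ℝ := min ε 1 with hε'def
  have hε'0 : 0 < ε' := lt_min hε one_pos
  have hε'ε : ε' ≤ ε := min_le_left _ _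
  -- eventual step bound
  obtain ⟨N, hN⟩ := eventually_atTop.mp ((tendsto_order.mp ha_ratio).2 (1 + ε') (by linarith))
  have hstep : ∀ n, N ≤ n → (a (n + 1) : ℝ) ≤ (1 + ε') * a n := by
    intro n hn
    have hpos : (0 : ℝ) < a n := by exact_mod_cast ha_pos n
    have := hN n hn
    rw [div_lt_iff₀ hpos] at this
    linarith
  -- find a small nonzero element of range d
  have haN : (0 : ℝ) < a N := by exact_mod_cast ha_pos N
  have hr : (0 : ℝ) < ε' / a N := div_pos hε'0 haN
  obtain ⟨y, ⟨hyU, m, hym⟩, hyne⟩ :=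
    accPt_iff_nhds.mp hd (Metric.ball 0 (ε' / a N)) (Metric.ball_mem_nhds _ hr)
  obtain ⟨δ₀, hδ₀⟩ := QuotientAddGroup.mk_surjective (d m)
  have hδ₀' : (δ₀ : UnitAddCircle) = d m := hδ₀
  set η : ℝ := δ₀ - round δ₀ with hηdef
  have hround0 : ((round δ₀ : ℝ) : UnitAddCircle) = 0 := by
    rw [AddCircle.coe_eq_zero_iff]
    exact ⟨round δ₀, by simp⟩
  have hη : (η : UnitAddCircle) = d m := by
    rw [hηdef, AddCircle.coe_sub, hround0, hδ₀', sub_zero]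
  have hnorm : |η| < ε' / a N := by
    have h1 : ‖d m‖ < ε' / a N := by
      have := Metric.mem_ball.mp hyU
      rw [← hym] at this
      rwa [dist_zero_right] at this
    rw [← hδ₀', UnitAddCircle.norm_eq] at h1
    exact h1
  have hηne : η ≠ 0 := by
    intro h
    apply hyne
    rw [← hym, ← hη, h]
    exact (QuotientAddGroup.mk_zero _)
  have hδabs : (0 : ℝ) < |η| := abs_pos.mpr hηne
  have hstart : (a N : ℝ) * |η| < ε' := by
    rw [lt_div_iff₀ haN] at hnorm
    linarith
  -- the key smul identity
  have hsmul : ∀ n : ℕ, a n • d m = (((a n : ℝ) * η : ℝ) : UnitAddCircle) := by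
    intro n
    rw [← hη, ← AddCircle.coe_nsmul, nsmul_eq_mul]
  rcases hηne.lt_or_gt with hneg | hpos
  · -- η < 0 : approximate -x
    obtain ⟨ξ₀, hξ₀⟩ := QuotientAddGroup.mk_surjective (-x)
    have hξ₀' : (ξ₀ : UnitAddCircle) = -x := hξ₀
    set ξ : ℝ := Int.fract ξ₀ with hξdef
    have hξx : (ξ : UnitAddCircle) = -x := by
      rw [hξdef, Int.fract, AddCircle.coe_sub, hξ₀']
      have : ((⌊ξ₀⌋ : ℝ) : UnitAddCircle) = 0 := by
        rw [AddCircle.coe_eq_zero_iff]; exact ⟨⌊ξ₀⌋, by simp⟩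
      rw [this, sub_zero]
    obtain ⟨n, hn⟩ := sweep_lemma a ha_mono ε' (|η|) ξ hε'0 hδabs
      (Int.fract_nonneg _) (Int.fract_lt_one _) N hstep hstart
    refine ⟨a n • d m, Metric.mem_ball.mpr ?_, n, m, rfl⟩
    have habs : |η| = -η := abs_of_neg hneg
    have heq : a n • d m = -(((a n : ℝ) * |η| : ℝ) : UnitAddCircle) := by
      rw [hsmul n, ← AddCircle.coe_neg, habs]
      ring_nf
    calc dist (a n • d m) x = dist (((a n : ℝ) * |η| : ℝ) : UnitAddCircle) (-x) := by
          rw [heq, ← dist_neg_neg, neg_neg]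
      _ = dist (((a n : ℝ) * |η| : ℝ) : UnitAddCircle) ((ξ : ℝ) : UnitAddCircle) := by
          rw [hξx]
      _ ≤ |(a n : ℝ) * |η| - ξ| := dist_coe_le _ _
      _ < ε' := hn
      _ ≤ ε := hε'ε
  · -- η > 0 : approximate x
    obtain ⟨ξ₀, hξ₀⟩ := QuotientAddGroup.mk_surjective x
    have hξ₀' : (ξ₀ : UnitAddCircle) = x := hξ₀
    set ξ : ℝ := Int.fract ξ₀ with hξdef
    have hξx : (ξ : UnitAddCircle) = x := by
      rw [hξdef, Int.fract, AddCircle.coe_sub, hξ₀']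
      have : ((⌊ξ₀⌋ : ℝ) : UnitAddCircle) = 0 := by
        rw [AddCircle.coe_eq_zero_iff]; exact ⟨⌊ξ₀⌋, by simp⟩
      rw [this, sub_zero]
    obtain ⟨n, hn⟩ := sweep_lemma a ha_mono ε' (|η|) ξ hε'0 hδabs
      (Int.fract_nonneg _) (Int.fract_lt_one _) N hstep hstart
    refine ⟨a n • d m, Metric.mem_ball.mpr ?_, n, m, rfl⟩
    have habs : |η| = η := abs_of_pos hpos
    calc dist (a n • d m) x = dist (((a n : ℝ) * |η| : ℝ) : UnitAddCircle) ((ξ : ℝ) : UnitAddCircle) := by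
          rw [hsmul n, habs, hξx]
      _ ≤ |(a n : ℝ) * |η| - ξ| := dist_coe_le _ _
      _ < ε' := hn
      _ ≤ ε := hε'ε
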